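/- arXiv:2112.12622 — 3 statements merged into one kernel-verified Lean document; each statement's English description precedes it below -/
import Mathlib

section
/- If Ω is purely imaginary, then for every z ∈ ℝ^g and every δ'' ∈ (½ℤ)^g, the value θ[0;δ''](z|Ω) is strictly positive. -/
/-- The Riemann theta function with characteristic `(a, b)`, associated to the
period matrix `Ω`:
`θ[a;b](z|Ω) = Σ_{n ∈ ℤ^g} exp(iπ((n+a)·Ω(n+a) + 2(n+a)·(z+b)))`. -/
noncomputable def thetaChar {g : ℕ} (Ω : Matrix (Fin g) (Fin g) ℂ)
    (a b : Fin g → ℂ) (z : Fin g → ℂ) : ℂ :=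
  ∑' n : Fin g → ℤ,
    Complex.exp (Real.pi * Complex.I *
      ((∑ i, ((n i : ℂ) + a i) * (∑ j, Ω i j * ((n j : ℂ) + a j))) +
        2 * ∑ i, ((n i : ℂ) + a i) * (z i + b i)))

noncomputable section
open Complex Finset

namespace Stmt6Aux

def Q {g : ℕ} (A : Matrix (Fin g) (Fin g) ℝ) (v : Fin g → ℝ) : ℝ :=
  ∑ i, v i * ∑ j, A i j * v j

def gw {g : ℕ} (A : Matrix (Fin g) (Fin g) ℝ) (n : Fin g → ℤ) : ℝ :=
  Real.exp (-Real.pi * Q A fun i => (n i : ℝ))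

def S {g : ℕ} (A : Matrix (Fin g) (Fin g) ℝ) (w : Fin g → ℝ) : ℂ :=
  ∑' n : Fin g → ℤ,
    Complex.exp (((-Real.pi * Q A fun i => (n i : ℝ) : ℝ) : ℂ) +
      2 * Real.pi * Complex.I * ((∑ i, (n i : ℝ) * w i : ℝ) : ℂ))

lemma norm_term (x y : ℝ) :
    ‖Complex.exp ((x : ℂ) + 2 * Real.pi * Complex.I * (y : ℂ))‖ = Real.exp x := by
  rw [Complex.norm_exp]
  congr 1
  simp [Complex.add_re, Complex.mul_re, Complex.mul_im]

def tl {g : ℕ} (A : Matrix (Fin (g+1)) (Fin (g+1)) ℝ) : Matrix (Fin g) (Fin g) ℝ :=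
  Matrix.of fun i j => A i.succ j.succ

def bv {g : ℕ} (A : Matrix (Fin (g+1)) (Fin (g+1)) ℝ) : Fin g → ℝ :=
  fun i => A 0 i.succ

def schur {g : ℕ} (A : Matrix (Fin (g+1)) (Fin (g+1)) ℝ) : Matrix (Fin g) (Fin g) ℝ :=
  Matrix.of fun i j => tl A i j - bv A i * bv A j / A 0 0

lemma Q_cons {g : ℕ} (A : Matrix (Fin (g+1)) (Fin (g+1)) ℝ) (hA : A.IsSymm)
    (x : ℝ) (v : Fin g → ℝ) :
    Q A (Fin.cons x v) = A 0 0 * x ^ 2 + 2 * (∑ i, bv A i * v i) * x + Q (tl A) v := by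
  unfold Q
  rw [Fin.sum_univ_succ]
  simp only [Fin.cons_zero, Fin.cons_succ]
  have e1 : ∑ j, A 0 j * (Fin.cons x v : Fin (g+1) → ℝ) j = A 0 0 * x + ∑ j, bv A j * v j := by
    rw [Fin.sum_univ_succ]; simp [bv]
  have e2 : ∀ i : Fin g, ∑ j, A i.succ j * (Fin.cons x v : Fin (g+1) → ℝ) j
      = bv A i * x + ∑ j, tl A i j * v j := by
    intro i
    rw [Fin.sum_univ_succ]
    simp only [Fin.cons_zero, Fin.cons_succ]
    rw [hA.apply 0 i.succ]
    rfl
  rw [e1]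
  simp_rw [e2, mul_add]
  rw [Finset.sum_add_distrib]
  have e3 : ∑ i, v i * (bv A i * x) = (∑ i, bv A i * v i) * x := by
    rw [Finset.sum_mul]; exact Finset.sum_congr rfl fun i _ => by ring
  rw [e3]
  ring

lemma Q_schur {g : ℕ} (A : Matrix (Fin (g+1)) (Fin (g+1)) ℝ) (v : Fin g → ℝ) :
    Q (schur A) v = Q (tl A) v - (∑ i, bv A i * v i) ^ 2 / A 0 0 := by
  unfold Q schur
  simp only [Matrix.of_apply]
  have e1 : ∀ i, ∑ j, (tl A i j - bv A i * bv A j / A 0 0) * v j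
      = (∑ j, tl A i j * v j) - bv A i * (∑ j, bv A j * v j) / A 0 0 := by
    intro i
    simp_rw [sub_mul]
    rw [Finset.sum_sub_distrib]
    congr 1
    rw [Finset.mul_sum, Finset.sum_div]
    exact Finset.sum_congr rfl fun j _ => by ring
  simp_rw [e1, mul_sub]
  rw [Finset.sum_sub_distrib]
  congr 1
  have e2 : ∑ i, v i * (bv A i * (∑ j, bv A j * v j) / A 0 0)
      = (∑ i, bv A i * v i) * (∑ j, bv A j * v j) / A 0 0 := by
    rw [Finset.sum_mul, Finset.sum_div]
    exact Finset.sum_congr rfl fun i _ => by ring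
  rw [e2]
  ring

lemma Q_cons_schur {g : ℕ} (A : Matrix (Fin (g+1)) (Fin (g+1)) ℝ) (hA : A.IsSymm)
    (ha : A 0 0 ≠ 0) (x : ℝ) (v : Fin g → ℝ) :
    Q A (Fin.cons x v)
      = A 0 0 * (x + (∑ i, bv A i * v i) / A 0 0) ^ 2 + Q (schur A) v := by
  rw [Q_cons A hA x v, Q_schur A v]
  field_simp
  ring


lemma dot_eq_Q {g : ℕ} (A : Matrix (Fin g) (Fin g) ℝ) (v : Fin g → ℝ) :
    dotProduct (star v) (A.mulVec v) = Q A v := by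
  simp only [dotProduct, Matrix.mulVec, Q, star_trivial]

lemma Q_pos {g : ℕ} {A : Matrix (Fin g) (Fin g) ℝ} (hA : A.PosDef)
    {v : Fin g → ℝ} (hv : v ≠ 0) : 0 < Q A v := by
  have := hA.dotProduct_mulVec_pos hv
  rwa [dot_eq_Q] at this

lemma diag_pos {g : ℕ} {A : Matrix (Fin g) (Fin g) ℝ} (hA : A.PosDef) (i : Fin g) :
    0 < A i i := by
  have h := Q_pos hA (v := Pi.single i 1) (by
    intro h
    have := congrFun h i
    simp [Pi.single_apply] at this)
  have : Q A (Pi.single i 1) = A i i := by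
    simp [Q, Pi.single_apply, mul_ite, ite_mul, Finset.sum_ite_eq', Finset.mul_sum]
  rwa [this] at h


lemma schur_isSymm {g : ℕ} {A : Matrix (Fin (g+1)) (Fin (g+1)) ℝ} (hA : A.IsSymm) :
    (schur A).IsSymm := by
  unfold Matrix.IsSymm
  ext i j
  simp only [Matrix.transpose_apply, schur, tl, bv, Matrix.of_apply]
  rw [hA.apply i.succ j.succ, mul_comm]

lemma schur_posDef {g : ℕ} {A : Matrix (Fin (g+1)) (Fin (g+1)) ℝ} (hA : A.IsSymm)
    (hpd : A.PosDef) : (schur A).PosDef := by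
  have ha : (0:ℝ) < A 0 0 := diag_pos hpd 0
  refine Matrix.PosDef.of_dotProduct_mulVec_pos ?_ ?_
  · rw [Matrix.IsHermitian, Matrix.conjTranspose_eq_transpose_of_trivial]
    exact schur_isSymm hA
  · intro v hv
    rw [dot_eq_Q]
    set x : ℝ := -(∑ i, bv A i * v i) / A 0 0 with hx
    have hcons : (Fin.cons x v : Fin (g+1) → ℝ) ≠ 0 := by
      intro h
      apply hv
      funext i
      have := congrFun h i.succ
      simpa [Fin.cons_succ] using this
    have hkey : Q A (Fin.cons x v) = Q (schur A) v := by
      rw [Q_cons_schur A hA ha.ne' x v, hx]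
      have : -(∑ i, bv A i * v i) / A 0 0 + (∑ i, bv A i * v i) / A 0 0 = 0 := by ring
      rw [this]
      ring
    rw [← hkey]
    exact Q_pos hpd hcons

lemma summable_shift {a : ℝ} (ha : 0 < a) (t : ℝ) :
    Summable fun n : ℤ => Real.exp (-Real.pi * a * ((n : ℝ) + t) ^ 2) := by
  have h1 : Summable fun n : ℤ => jacobiTheta₂_term n (Complex.I * (a * t)) (Complex.I * a) := by
    rw [summable_jacobiTheta₂_term_iff]
    simp [ha]
  have h2 : Summable fun n : ℤ => ‖jacobiTheta₂_term n (Complex.I * (a * t)) (Complex.I * a)‖ :=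
    summable_norm_iff.mpr h1
  have h3 := h2.mul_left (Real.exp (-Real.pi * a * t ^ 2))
  apply h3.congr
  intro n
  have e : jacobiTheta₂_term n (Complex.I * (a * t)) (Complex.I * a)
      = Complex.exp (((-Real.pi * a * (n:ℝ)^2 - 2*Real.pi*a*t*(n:ℝ) : ℝ) : ℂ)) := by
    unfold jacobiTheta₂_term
    congr 1
    push_cast
    linear_combination ((2*(Real.pi:ℂ)*a*t*(n:ℂ) + Real.pi*a*(n:ℂ)^2)) * Complex.I_sq
  rw [e, Complex.norm_exp, Complex.ofReal_re, ← Real.exp_add]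
  congr 1
  ring

lemma tsum_shift_bound {a : ℝ} (ha : 0 < a) :
    ∃ C : ℝ, 0 < C ∧ ∀ t : ℝ, (∑' n : ℤ, Real.exp (-Real.pi * a * ((n : ℝ) + t) ^ 2)) ≤ C := by
  have hainv : (0:ℝ) < 1/a := by positivity
  refine ⟨(1 / a ^ ((1:ℝ)/2)) * ∑' m : ℤ, Real.exp (-Real.pi * (1/a) * ((m:ℝ) + 0) ^ 2), ?_, ?_⟩
  · apply mul_pos (by positivity)
    exact Summable.tsum_pos (summable_shift hainv 0) (fun m => (Real.exp_pos _).le) 0 (Real.exp_pos _)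
  intro t
  -- the complex-valued identity via 1-D Poisson summation
  have key : ((∑' n : ℤ, Real.exp (-Real.pi * a * ((n : ℝ) + t) ^ 2) : ℝ) : ℂ)
      = Complex.exp (((-Real.pi * a * t^2 : ℝ) : ℂ)) *
        (1 / (a:ℂ) ^ ((1:ℂ)/2) *
          ∑' m : ℤ, Complex.exp (-(Real.pi:ℂ) / a * ((m:ℂ) + Complex.I * (-(a*t) : ℝ)) ^ 2)) := by
    rw [Complex.ofReal_tsum]
    have e1 : ∀ n : ℤ, ((Real.exp (-Real.pi * a * ((n : ℝ) + t) ^ 2) : ℝ) : ℂ)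
        = Complex.exp (((-Real.pi * a * t^2 : ℝ) : ℂ)) *
          Complex.exp (-(Real.pi:ℂ) * (a:ℂ) * (n:ℂ)^2 + 2*(Real.pi:ℂ) * ((-(a*t):ℝ):ℂ) * (n:ℂ)) := by
      intro n
      rw [Complex.ofReal_exp, ← Complex.exp_add]
      congr 1
      push_cast
      ring
    rw [tsum_congr e1, tsum_mul_left]
    congr 1
    exact Complex.tsum_exp_neg_quadratic (by simpa using ha) _
  have hnorm : ∀ m : ℤ, ‖Complex.exp (-(Real.pi:ℂ) / a * ((m:ℂ) + Complex.I * (-(a*t) : ℝ)) ^ 2)‖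
      = Real.exp (Real.pi * a * t^2) * Real.exp (-Real.pi * (1/a) * ((m:ℝ) + 0) ^ 2) := by
    intro m
    have e2 : -(Real.pi:ℂ) / a * ((m:ℂ) + Complex.I * (-(a*t) : ℝ)) ^ 2
        = ((-Real.pi/a * (m:ℝ)^2 + Real.pi*a*t^2 : ℝ) : ℂ) + 2*Real.pi*Complex.I*((t*(m:ℝ) : ℝ):ℂ) := by
      push_cast
      have h : (a:ℂ) ≠ 0 := by exact_mod_cast ha.ne'
      field_simp
      linear_combination (-(a:ℂ)^2 * t^2) * Complex.I_sq
    rw [e2]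
    rw [Complex.norm_exp]
    simp only [Complex.add_re, Complex.ofReal_re, ← Real.exp_add]
    congr 1
    simp [Complex.mul_re]
    ring_nf
  have hsum2 : Summable fun m : ℤ =>
      ‖Complex.exp (-(Real.pi:ℂ) / a * ((m:ℂ) + Complex.I * (-(a*t) : ℝ)) ^ 2)‖ := by
    apply Summable.congr ((summable_shift hainv 0).mul_left (Real.exp (Real.pi * a * t^2)))
    intro m
    rw [hnorm m]
  calc (∑' n : ℤ, Real.exp (-Real.pi * a * ((n : ℝ) + t) ^ 2))
      = ‖((∑' n : ℤ, Real.exp (-Real.pi * a * ((n : ℝ) + t) ^ 2) : ℝ) : ℂ)‖ := by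
        rw [Complex.norm_real, Real.norm_eq_abs]
        exact (_root_.abs_of_nonneg (tsum_nonneg fun n => (Real.exp_pos _).le)).symm
    _ ≤ Real.exp (-Real.pi * a * t^2) * ((1 / a ^ ((1:ℝ)/2)) *
          ∑' m : ℤ, (Real.exp (Real.pi * a * t^2) * Real.exp (-Real.pi * (1/a) * ((m:ℝ) + 0) ^ 2))) := by
        rw [key]
        rw [norm_mul, norm_mul]
        gcongr
        · rw [Complex.norm_exp, Complex.ofReal_re]
        · rw [norm_div, norm_one]
          rw [show ((a:ℂ) ^ ((1:ℂ)/2)) = ((a ^ ((1:ℝ)/2) : ℝ) : ℂ) by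
            rw [Complex.ofReal_cpow ha.le]; norm_num]
          rw [Complex.norm_real, Real.norm_eq_abs, _root_.abs_of_nonneg (by positivity : (0:ℝ) ≤ a ^ ((1:ℝ)/2))]
        · calc ‖∑' m : ℤ, Complex.exp (-(Real.pi:ℂ) / a * ((m:ℂ) + Complex.I * (-(a*t) : ℝ)) ^ 2)‖
              ≤ ∑' m : ℤ, ‖Complex.exp (-(Real.pi:ℂ) / a * ((m:ℂ) + Complex.I * (-(a*t) : ℝ)) ^ 2)‖ :=
                norm_tsum_le_tsum_norm hsum2
            _ = ∑' m : ℤ, (Real.exp (Real.pi * a * t^2) * Real.exp (-Real.pi * (1/a) * ((m:ℝ) + 0) ^ 2)) :=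
                tsum_congr hnorm
    _ = (1 / a ^ ((1:ℝ)/2)) * ∑' m : ℤ, Real.exp (-Real.pi * (1/a) * ((m:ℝ) + 0) ^ 2) := by
        rw [tsum_mul_left, mul_left_comm]
        congr 1
        rw [← mul_assoc, ← Real.exp_add, show -Real.pi * a * t^2 + Real.pi * a * t^2 = 0 by ring,
          Real.exp_zero, one_mul]


theorem main : ∀ (g : ℕ) (A : Matrix (Fin g) (Fin g) ℝ), A.IsSymm → A.PosDef →
    Summable (gw A) ∧ ∀ w : Fin g → ℝ, ∃ r : ℝ, 0 < r ∧ S A w = r := by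
  intro g
  induction g with
  | zero =>
    intro A _ _
    constructor
    · exact Summable.of_finite
    · intro w
      refine ⟨1, one_pos, ?_⟩
      rw [show S A w = ∑' n : Fin 0 → ℤ,
        Complex.exp (((-Real.pi * Q A fun i => (n i : ℝ) : ℝ) : ℂ) +
          2 * Real.pi * Complex.I * ((∑ i, (n i : ℝ) * w i : ℝ) : ℂ)) from rfl]
      rw [tsum_eq_single (0 : Fin 0 → ℤ) (fun b hb => absurd (Subsingleton.elim b 0) hb)]
      simp [Q]
  | succ g IH =>
    intro A hsym hpd
    have ha : (0:ℝ) < A 0 0 := diag_pos hpd 0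
    obtain ⟨hsumS, hposS⟩ := IH (schur A) (schur_isSymm hsym) (schur_posDef hsym hpd)
    obtain ⟨C, hCpos, hCle⟩ := tsum_shift_bound ha
    have haC : ((A 0 0 : ℝ) : ℂ) ≠ 0 := by exact_mod_cast ha.ne'
    -- casting `Fin.cons` of integer vectors
    have hcast : ∀ (x : ℤ) (v : Fin g → ℤ),
        (fun i => ((Fin.cons x v : Fin (g+1) → ℤ) i : ℝ))
          = (Fin.cons (x:ℝ) (fun i => (v i : ℝ)) : Fin (g+1) → ℝ) := by
      intro x v
      funext i
      refine Fin.cases ?_ ?_ i <;> simp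
    -- the equivalence
    set e2 : (Fin g → ℤ) × ℤ ≃ (Fin (g+1) → ℤ) :=
      (Equiv.prodComm (Fin g → ℤ) ℤ).trans (Fin.consEquiv fun _ => ℤ) with he2def
    have he2 : ∀ p : (Fin g → ℤ) × ℤ, e2 p = (Fin.cons p.2 p.1 : Fin (g+1) → ℤ) :=
      fun p => rfl
    -- decomposition of the Gaussian weight
    have hgw : ∀ (x : ℤ) (v : Fin g → ℤ),
        gw A (Fin.cons x v)
          = Real.exp (-Real.pi * A 0 0 *
              ((x:ℝ) + (∑ i, bv A i * (v i : ℝ)) / A 0 0) ^ 2) * gw (schur A) v := by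
      intro x v
      unfold gw
      rw [hcast, Q_cons_schur A hsym ha.ne', ← Real.exp_add]
      congr 1
      ring
    -- summability of the Gaussian weights for A
    have hsumA : Summable (gw A) := by
      rw [← Equiv.summable_iff e2]
      apply (summable_prod_of_nonneg (Pi.le_def.mpr fun p => (Real.exp_pos _).le)).mpr
      constructor
      · intro v
        apply Summable.congr
          ((summable_shift ha ((∑ i, bv A i * (v i : ℝ)) / A 0 0)).mul_right (gw (schur A) v))
        intro x
        show Real.exp (-Real.pi * A 0 0 *
              ((x:ℝ) + (∑ i, bv A i * (v i : ℝ)) / A 0 0) ^ 2) * gw (schur A) v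
          = (gw A ∘ e2) (v, x)
        rw [Function.comp_apply, he2 (v, x)]
        exact (hgw x v).symm
      · apply Summable.of_nonneg_of_le
          (fun v => tsum_nonneg fun x => (Real.exp_pos _).le)
          (fun v => ?_) (hsumS.mul_left C)
        have h1 : ∀ x : ℤ, (gw A ∘ e2) (v, x)
            = Real.exp (-Real.pi * A 0 0 *
                ((x:ℝ) + (∑ i, bv A i * (v i : ℝ)) / A 0 0) ^ 2) * gw (schur A) v := by
          intro x
          rw [Function.comp_apply, he2 (v, x)]
          exact hgw x v
        show (∑' x : ℤ, (gw A ∘ e2) (v, x)) ≤ C * gw (schur A) v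
        rw [tsum_congr h1, tsum_mul_right]
        exact mul_le_mul_of_nonneg_right
          (hCle ((∑ i, bv A i * (v i : ℝ)) / A 0 0)) (Real.exp_pos _).le
    refine ⟨hsumA, ?_⟩
    intro w
    set u : ℤ → Fin g → ℝ := fun m i => w i.succ + (((m:ℝ) - w 0) / A 0 0) * bv A i with hu
    choose r hrpos hSr using fun m : ℤ => hposS (u m)
    set E : ℤ → ℝ := fun m => Real.exp (-Real.pi / A 0 0 * ((m:ℝ) - w 0) ^ 2) with hE
    have hEpos : ∀ m : ℤ, 0 < E m := fun m => Real.exp_pos _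
    have hsumE : Summable E := by
      apply Summable.congr (summable_shift (a := 1 / A 0 0) (by positivity) (-(w 0)))
      intro m
      simp only [hE]
      congr 1
      ring
    have hR : ∀ m : ℤ, r m ≤ ∑' v : Fin g → ℤ, gw (schur A) v := by
      intro m
      have h1 : ‖S (schur A) (u m)‖ ≤ ∑' v : Fin g → ℤ, gw (schur A) v := by
        refine le_trans (norm_tsum_le_tsum_norm ?_) (le_of_eq (tsum_congr fun v => norm_term _ _))
        exact Summable.congr hsumS fun v => (norm_term _ _).symm
      rw [hSr m, Complex.norm_real, Real.norm_eq_abs, _root_.abs_of_pos (hrpos m)] at h1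
      exact h1
    have hsumEr : Summable fun m : ℤ => E m * r m :=
      Summable.of_nonneg_of_le (fun m => mul_nonneg (hEpos m).le (hrpos m).le)
        (fun m => mul_le_mul_of_nonneg_left (hR m) (hEpos m).le)
        (hsumE.mul_right _)
    refine ⟨(1 / A 0 0 ^ ((1:ℝ)/2)) * ∑' m : ℤ, E m * r m, ?_, ?_⟩
    · refine mul_pos (by positivity) ?_
      exact Summable.tsum_pos hsumEr (fun m => mul_nonneg (hEpos m).le (hrpos m).le) 0
        (mul_pos (hEpos 0) (hrpos 0))
    set β : (Fin g → ℤ) → ℂ := fun v =>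
      ((-(∑ i, bv A i * (v i : ℝ)) : ℝ) : ℂ) + Complex.I * ((w 0 : ℝ) : ℂ) with hβ
    set Cc : (Fin g → ℤ) → ℂ := fun v =>
      ((-Real.pi * Q (tl A) fun i => (v i : ℝ) : ℝ) : ℂ) +
        2 * Real.pi * Complex.I * ((∑ i, (v i : ℝ) * w i.succ : ℝ) : ℂ) with hCc
    set F : (Fin (g+1) → ℤ) → ℂ := fun n =>
      Complex.exp (((-Real.pi * Q A fun i => (n i : ℝ) : ℝ) : ℂ) +
        2 * Real.pi * Complex.I * ((∑ i, (n i : ℝ) * w i : ℝ) : ℂ)) with hF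
    set H : (Fin g → ℤ) → ℤ → ℂ := fun v m =>
      Complex.exp (Cc v) *
        Complex.exp (-(Real.pi:ℂ)/((A 0 0 : ℝ):ℂ) * ((m:ℂ) + Complex.I * β v)^2) with hH
    have hsumF : Summable F := by
      apply Summable.of_norm
      apply Summable.congr hsumA
      intro n
      simp only [hF]
      exact (norm_term _ _).symm
    have claim1 : ∀ (v : Fin g → ℤ) (x : ℤ),
        F (Fin.cons x v) = Complex.exp (Cc v) *
          Complex.exp (-(Real.pi:ℂ) * ((A 0 0 : ℝ):ℂ) * (x:ℂ)^2 +
            2*(Real.pi:ℂ) * β v * (x:ℂ)) := by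
      intro v x
      simp only [hF, hβ, hCc]
      rw [← Complex.exp_add]
      congr 1
      rw [hcast x v, Q_cons A hsym]
      rw [show (∑ i, ((Fin.cons x v : Fin (g+1) → ℤ) i : ℝ) * w i)
          = (x:ℝ) * w 0 + ∑ i, (v i : ℝ) * w i.succ by
        rw [Fin.sum_univ_succ]; simp]
      push_cast
      ring
    have hpoisson : ∀ v : Fin g → ℤ,
        (∑' x : ℤ, Complex.exp (-(Real.pi:ℂ) * ((A 0 0 : ℝ):ℂ) * (x:ℂ)^2 +
            2*(Real.pi:ℂ) * β v * (x:ℂ)))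
          = 1/((A 0 0 : ℝ):ℂ)^((1:ℂ)/2) *
            ∑' m : ℤ, Complex.exp (-(Real.pi:ℂ)/((A 0 0 : ℝ):ℂ) * ((m:ℂ) + Complex.I * β v)^2) :=
      fun v => Complex.tsum_exp_neg_quadratic (by simpa using ha) (β v)
    have claim2 : ∀ (v : Fin g → ℤ) (m : ℤ), H v m
        = ((E m : ℝ) : ℂ) *
          Complex.exp (((-Real.pi * Q (schur A) fun i => (v i : ℝ) : ℝ) : ℂ) +
            2 * Real.pi * Complex.I * ((∑ i, (v i : ℝ) * u m i : ℝ) : ℂ)) := by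
      intro v m
      simp only [hH, hβ, hCc, hE, hu]
      rw [show ((Real.exp (-Real.pi / A 0 0 * ((m:ℝ) - w 0) ^ 2) : ℝ) : ℂ)
          = Complex.exp (((-Real.pi / A 0 0 * ((m:ℝ) - w 0) ^ 2 : ℝ) : ℂ)) from Complex.ofReal_exp _]
      rw [← Complex.exp_add, ← Complex.exp_add]
      congr 1
      rw [Q_schur A]
      rw [show (∑ i, (v i:ℝ) * (w i.succ + (((m:ℝ) - w 0) / A 0 0) * bv A i))
          = (∑ i, (v i:ℝ) * w i.succ) + (((m:ℝ) - w 0) / A 0 0) * (∑ i, bv A i * (v i:ℝ)) by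
        simp only [mul_add]
        rw [Finset.sum_add_distrib]
        congr 1
        rw [Finset.mul_sum]
        exact Finset.sum_congr rfl fun i _ => by ring]
      push_cast
      field_simp
      linear_combination ((1:ℂ) *
        (2*(∑ x, ((bv A x : ℝ):ℂ) * ((v x : ℤ):ℂ))*((w 0:ℝ):ℂ)*Complex.I
          - 2*((m:ℤ):ℂ)*((w 0:ℝ):ℂ)
          - (∑ x, ((bv A x : ℝ):ℂ) * ((v x : ℤ):ℂ))^2
          + ((w 0:ℝ):ℂ)^2 - ((w 0:ℝ):ℂ)^2*Complex.I^2)) * Complex.I_sq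
    have hHnorm : ∀ (v : Fin g → ℤ) (m : ℤ), ‖H v m‖ = gw (schur A) v * E m := by
      intro v m
      rw [claim2 v m, norm_mul, Complex.norm_real, Real.norm_eq_abs,
        _root_.abs_of_pos (hEpos m), norm_term, mul_comm]
      rfl
    have hsumH : Summable (Function.uncurry H) := by
      apply Summable.of_norm
      apply Summable.congr (hsumS.mul_of_nonneg hsumE
        (Pi.le_def.mpr fun v => (Real.exp_pos _).le) (Pi.le_def.mpr fun m => (hEpos m).le))
      intro p
      exact (hHnorm p.1 p.2).symm
    have hsumHv : ∀ v, Summable (H v) := by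
      intro v
      apply Summable.of_norm
      apply Summable.congr (hsumE.mul_left (gw (schur A) v))
      intro m
      exact (hHnorm v m).symm
    have hsumHm : ∀ m : ℤ, Summable fun v => H v m := by
      intro m
      apply Summable.of_norm
      apply Summable.congr (hsumS.mul_right (E m))
      intro v
      exact (hHnorm v m).symm
    have hVm : ∀ m : ℤ, (∑' v : Fin g → ℤ, H v m) = ((E m * r m : ℝ) : ℂ) := by
      intro m
      rw [tsum_congr (fun v => claim2 v m), tsum_mul_left]
      rw [show (∑' v : Fin g → ℤ,
          Complex.exp (((-Real.pi * Q (schur A) fun i => (v i : ℝ) : ℝ) : ℂ) +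
            2 * Real.pi * Complex.I * ((∑ i, (v i : ℝ) * u m i : ℝ) : ℂ)))
          = S (schur A) (u m) from rfl]
      rw [hSr m]
      push_cast
      ring
    have hsumFe : Summable fun p : (Fin g → ℤ) × ℤ => F (Fin.cons p.2 p.1) := by
      refine ((Equiv.summable_iff e2).mpr hsumF).congr fun p => ?_
      show F (e2 p) = _
      rw [he2 p]
    calc S A w = ∑' p : (Fin g → ℤ) × ℤ, F (Fin.cons p.2 p.1) := by
          rw [show S A w = ∑' n, F n from rfl, ← Equiv.tsum_eq e2 F]
          exact tsum_congr fun p => by rw [he2 p]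
      _ = ∑' v : Fin g → ℤ, ∑' x : ℤ, F (Fin.cons x v) :=
          Summable.tsum_prod' hsumFe fun v => hsumFe.prod_factor v
      _ = ∑' v : Fin g → ℤ, (1/((A 0 0 : ℝ):ℂ)^((1:ℂ)/2) * ∑' m : ℤ, H v m) := by
          apply tsum_congr
          intro v
          rw [tsum_congr (claim1 v), tsum_mul_left, hpoisson v]
          simp only [hH]
          rw [tsum_mul_left]
          ring
      _ = 1/((A 0 0 : ℝ):ℂ)^((1:ℂ)/2) * ∑' v : Fin g → ℤ, ∑' m : ℤ, H v m := tsum_mul_left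
      _ = 1/((A 0 0 : ℝ):ℂ)^((1:ℂ)/2) * ∑' m : ℤ, ∑' v : Fin g → ℤ, H v m := by
          rw [← Summable.tsum_comm' hsumH hsumHv hsumHm]
      _ = 1/((A 0 0 : ℝ):ℂ)^((1:ℂ)/2) * ∑' m : ℤ, ((E m * r m : ℝ) : ℂ) := by
          rw [tsum_congr hVm]
      _ = ((1 / A 0 0 ^ ((1:ℝ)/2) * ∑' m : ℤ, E m * r m : ℝ) : ℂ) := by
          rw [← Complex.ofReal_tsum]
          rw [show (1:ℂ)/((A 0 0 : ℝ):ℂ)^((1:ℂ)/2) = ((1 / A 0 0 ^ ((1:ℝ)/2) : ℝ) : ℂ) by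
            rw [Complex.ofReal_div, Complex.ofReal_one, Complex.ofReal_cpow ha.le]
            norm_num]
          rw [← Complex.ofReal_mul]

end Stmt6Aux

/-- if `Ω` is purely imaginary (with `Im Ω` positive definite), then for
every `z ∈ ℝ^g` and every `δ'' ∈ (½ℤ)^g`, the value `θ[0;δ''](z|Ω)` is a strictly
positive real number. -/
theorem stmt6 {g : ℕ} (hg : 1 ≤ g) (Ω : Matrix (Fin g) (Fin g) ℂ)
    (hsym : Ω.IsSymm)
    (hpos : Matrix.PosDef (Matrix.of fun i j => (Ω i j).im))
    (him : ∀ i j, (Ω i j).re = 0)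
    (δ'' : Fin g → ℂ) (hδ'' : ∀ i, ∃ k : ℤ, δ'' i = k / 2) :
    ∀ x : Fin g → ℝ, ∃ r : ℝ, 0 < r ∧
      thetaChar Ω 0 δ'' (fun i => (x i : ℂ)) = (r : ℂ) := by
  intro x
  set A : Matrix (Fin g) (Fin g) ℝ := Matrix.of fun i j => (Ω i j).im with hA
  have hAsym : A.IsSymm := by
    unfold Matrix.IsSymm
    ext i j
    simp only [Matrix.transpose_apply, hA, Matrix.of_apply]
    rw [hsym.apply i j]
  set w : Fin g → ℝ := fun i => x i + (δ'' i).re with hw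
  have hδre : ∀ i, δ'' i = ((δ'' i).re : ℂ) := by
    intro i
    obtain ⟨k, hk⟩ := hδ'' i
    have h2 : δ'' i = (((k:ℝ)/2 : ℝ) : ℂ) := by rw [hk]; push_cast; ring
    rw [h2, Complex.ofReal_re]
  have hΩ : ∀ i j, Ω i j = ((A i j : ℝ) : ℂ) * Complex.I := by
    intro i j
    simp only [hA, Matrix.of_apply]
    rw [← Complex.re_add_im (Ω i j), him i j]
    simp
  obtain ⟨r, hr, hS⟩ := (Stmt6Aux.main g A hAsym hpos).2 w
  refine ⟨r, hr, ?_⟩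
  rw [← hS]
  unfold thetaChar Stmt6Aux.S
  apply tsum_congr
  intro n
  congr 1
  simp only [Pi.zero_apply, add_zero]
  have h1 : (∑ i, (n i : ℂ) * ∑ j, Ω i j * (n j : ℂ))
      = ((Stmt6Aux.Q A fun i => (n i : ℝ) : ℝ) : ℂ) * Complex.I := by
    unfold Stmt6Aux.Q
    push_cast
    rw [Finset.sum_mul]
    apply Finset.sum_congr rfl
    intro i _
    rw [show (∑ j, Ω i j * (n j : ℂ)) = (∑ j, ((A i j : ℝ) : ℂ) * (n j : ℂ)) * Complex.I by
      rw [Finset.sum_mul]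
      exact Finset.sum_congr rfl fun j _ => by rw [hΩ i j]; ring]
    ring
  have h2 : (∑ i, (n i : ℂ) * ((x i : ℂ) + δ'' i)) = ((∑ i, (n i : ℝ) * w i : ℝ) : ℂ) := by
    push_cast
    apply Finset.sum_congr rfl
    intro i _
    rw [hδre i]
    simp only [hw]
    push_cast
    ring
  rw [h1, h2]
  push_cast
  linear_combination ((Real.pi : ℂ) * ((Stmt6Aux.Q A fun i => (n i : ℝ) : ℝ) : ℂ)) * Complex.I_sq
end
end

section
/- Fay's identity in Fock's symmetric form: defining F_t(a,b) := θ(a+b−t)E(a,b), one has F_t(a,b)F_t(c,d) + F_t(a,d)F_t(b,c) + F_t(a,c)F_t(d,b) = 0 for all a,b,c,d and t. This follows formally from Mumford's form of Fay's trisecant identity θ(z+c−a)θ(z+d−b)E(c,b)E(a,d) + θ(z+c−b)θ(z+d−a)E(c,a)E(d,b) = θ(z+c+d−a−b)θ(z)E(c,d)E(a,b) by the substitution z = a+b−t, using the antisymmetry E(x,y) = −E(y,x). -/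
/-- Fay's identity in Fock's symmetric form. Abstract setting: `θ : V → ℂ`
on a complex vector space `V`, `E : X → X → ℂ` antisymmetric, `ι : X → V`, satisfying
Mumford's trisecant identity. Then with `F_t(a,b) := θ(a+b−t)E(a,b)` one has
`F_t(a,b)F_t(c,d) + F_t(a,d)F_t(b,c) + F_t(a,c)F_t(d,b) = 0`. -/
theorem stmt9 {V : Type*} [AddCommGroup V] [Module ℂ V] {X : Type*}
    (θ : V → ℂ) (E : X → X → ℂ) (ι : X → V)
    (hanti : ∀ x y, E x y = -E y x)
    (hFay : ∀ (z : V) (a b c d : X),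
      θ (z + ι c - ι a) * θ (z + ι d - ι b) * E c b * E a d +
        θ (z + ι c - ι b) * θ (z + ι d - ι a) * E c a * E d b =
      θ (z + ι c + ι d - ι a - ι b) * θ z * E c d * E a b)
    (t : V) (a b c d : X) :
    (θ (ι a + ι b - t) * E a b) * (θ (ι c + ι d - t) * E c d) +
      (θ (ι a + ι d - t) * E a d) * (θ (ι b + ι c - t) * E b c) +
      (θ (ι a + ι c - t) * E a c) * (θ (ι d + ι b - t) * E d b) = 0 := by
  have h := hFay (ι a + ι b - t) a b c d
  rw [show ι a + ι b - t + ι c - ι a = ι b + ι c - t by abel,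
      show ι a + ι b - t + ι d - ι b = ι a + ι d - t by abel,
      show ι a + ι b - t + ι c - ι b = ι a + ι c - t by abel,
      show ι a + ι b - t + ι d - ι a = ι d + ι b - t by abel,
      show ι a + ι b - t + ι c + ι d - ι a - ι b = ι c + ι d - t by abel,
      hanti c b, hanti c a] at h
  linear_combination -h
end

section
/- Let α₁ < α'₁ < α'₂ < ⋯ < α'_m < α₁ + 1 be real numbers (lifts to ℝ of cyclically ordered points on a circle ℝ/ℤ), and for each j choose lifts with α_j < α'_j < α'_{j+1} < α_j + 1 (indices mod m, with α'_{m+1} := α'₁ + 1). Then: (a) ⌊α'_{j+1} − α_j⌋ + ⌊α'_j − α_j⌋ ≡ ⌊α'_{j+1} − α'_j⌋ (mod 2) for each j, where ⌊·⌋ denotes the integer floor; and (b) Σ_{j=1}^m ⌊α'_{j+1} − α'_j⌋ is odd. Consequently Σ_{j=1}^m ⌊α'_{j+1} − α_j⌋ + Σ_{j=1}^m ⌊α'_j − α_j⌋ is odd. -/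
/-- the combinatorial (parity-of-floors) core of the Kasteleyn condition.
The cyclically ordered angles on the circle `ℝ/ℤ` are given by lifts
`α'₀ < α'₁ < ⋯ < α'_{m−1} < α'₀ + 1` (indices `0,…,m−1`), and for each `j` the lifts
satisfy `α_j < α'_j < α'_{j+1} < α_j + 1` (indices mod `m`, the lift of the successor of
`α'_{m−1}` being `α'₀ + 1`). Writing `next j` for the successor of `α'_j` in the cyclic
order (`α'_{j+1}` for `j < m−1`, and `α'₀` for `j = m−1`), the claims are:
(a) `⌊next j − α_j⌋ + ⌊α'_j − α_j⌋ ≡ ⌊next j − α'_j⌋ (mod 2)` for each `j`;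
(b) `Σ_j ⌊next j − α'_j⌋` is odd; consequently
(c) `Σ_j ⌊next j − α_j⌋ + Σ_j ⌊α'_j − α_j⌋` is odd. -/
theorem stmt17 (m : ℕ) (hm : 0 < m) (α α' : ℕ → ℝ)
    (hord : ∀ j < m,
      α j < α' j ∧
      α' j < (if j + 1 < m then α' (j + 1) else α' 0 + 1) ∧
      (if j + 1 < m then α' (j + 1) else α' 0 + 1) < α j + 1) :
    (∀ j < m,
      (⌊(if j + 1 < m then α' (j + 1) else α' 0) - α j⌋ + ⌊α' j - α j⌋) % 2 =
        ⌊(if j + 1 < m then α' (j + 1) else α' 0) - α' j⌋ % 2) ∧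
    Odd (∑ j ∈ Finset.range m,
      ⌊(if j + 1 < m then α' (j + 1) else α' 0) - α' j⌋) ∧
    Odd ((∑ j ∈ Finset.range m,
        ⌊(if j + 1 < m then α' (j + 1) else α' 0) - α j⌋) +
      ∑ j ∈ Finset.range m, ⌊α' j - α j⌋) := by
  -- m = 1 is contradictory
  by_cases h1 : m = 1
  · subst h1
    have h := hord 0 (by norm_num)
    rw [if_neg (by norm_num)] at h
    linarith [h.1, h.2.2]
  have hm2 : 2 ≤ m := by omega
  -- chain of inequalities: α' 0 ≤ α' j for j < m
  have hchain : ∀ j, j < m → α' 0 ≤ α' j := by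
    intro j hj
    induction j with
    | zero => exact le_refl _
    | succ k ih =>
      have hk : k < m := by omega
      have h2 := (hord k hk).2.1
      rw [if_pos hj] at h2
      exact le_of_lt (lt_of_le_of_lt (ih (by omega)) h2)
  -- floor values
  have hA : ∀ j, j < m → ⌊α' j - α j⌋ = 0 := by
    intro j hj
    obtain ⟨h1', h2', h3'⟩ := hord j hj
    rw [Int.floor_eq_zero_iff]
    constructor
    · linarith
    · by_cases hj1 : j + 1 < m
      · rw [if_pos hj1] at h2' h3'; linarith
      · rw [if_neg hj1] at h2' h3'; linarith
  have hB : ∀ j, j + 1 < m → ⌊α' (j + 1) - α j⌋ = 0 := by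
    intro j hj1
    obtain ⟨h1', h2', h3'⟩ := hord j (by omega)
    rw [if_pos hj1] at h2' h3'
    rw [Int.floor_eq_zero_iff]
    constructor
    · linarith
    · linarith
  have hC : ∀ j, j + 1 < m → ⌊α' (j + 1) - α' j⌋ = 0 := by
    intro j hj1
    obtain ⟨h1', h2', h3'⟩ := hord j (by omega)
    rw [if_pos hj1] at h2' h3'
    rw [Int.floor_eq_zero_iff]
    constructor
    · linarith
    · linarith
  -- last index facts
  have hlastlt : m - 1 < m := by omega
  have hnotlt : ¬ (m - 1 + 1 < m) := by omega
  obtain ⟨hl1, hl2, hl3⟩ := hord (m - 1) hlastlt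
  rw [if_neg hnotlt] at hl2 hl3
  have hD : ⌊α' 0 - α (m - 1)⌋ = -1 := by
    rw [Int.floor_eq_iff]
    constructor
    · push_cast; linarith
    · push_cast; linarith
  have hchainlast : α' 0 ≤ α' (m - 1) := hchain (m - 1) hlastlt
  have h0lt : α' 0 < α' (m - 1) := by
    rcases lt_or_eq_of_le hchainlast with h | h
    · exact h
    · exfalso
      -- α' 0 = α' (m-1); use hord 0: α' 0 < α' 1 ≤ α' (m-1)
      have h01 : 0 + 1 < m := by omega
      have := (hord 0 (by omega)).2.1
      rw [if_pos h01] at this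
      -- α' 1 ≤ α' (m-1): chain from 1
      have hch1 : ∀ j, 1 ≤ j → j < m → α' 1 ≤ α' j := by
        intro j hj1 hjm
        induction j with
        | zero => omega
        | succ k ih =>
          rcases Nat.eq_or_lt_of_le hj1 with he | hlt'
          · rw [← he]
          · have hk1 : 1 ≤ k := by omega
            have hk : k < m := by omega
            have h2 := (hord k hk).2.1
            rw [if_pos hjm] at h2
            exact le_of_lt (lt_of_le_of_lt (ih hk1 (by omega)) h2)
      have := lt_of_lt_of_le this (hch1 (m - 1) (by omega) hlastlt)
      linarith [h ▸ this]
  have hE : ⌊α' 0 - α' (m - 1)⌋ = -1 := by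
    rw [Int.floor_eq_iff]
    constructor
    · push_cast; linarith
    · push_cast; linarith
  refine ⟨?_, ?_, ?_⟩
  · intro j hj
    by_cases hj1 : j + 1 < m
    · rw [if_pos hj1, hB j hj1, hA j hj, hC j hj1]; decide
    · have hje : j = m - 1 := by omega
      rw [if_neg hj1, hje, hD, hA _ hlastlt, hE]; decide
  · have hsum : ∑ j ∈ Finset.range m,
        ⌊(if j + 1 < m then α' (j + 1) else α' 0) - α' j⌋ = -1 := by
      rw [Finset.sum_eq_single (m - 1)]
      · rw [if_neg hnotlt, hE]
      · intro j hj hne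
        have hj1 : j + 1 < m := by
          simp only [Finset.mem_range] at hj; omega
        rw [if_pos hj1, hC j hj1]
      · intro h; exact absurd (Finset.mem_range.mpr hlastlt) h
    rw [hsum]; decide
  · have hsum1 : ∑ j ∈ Finset.range m,
        ⌊(if j + 1 < m then α' (j + 1) else α' 0) - α j⌋ = -1 := by
      rw [Finset.sum_eq_single (m - 1)]
      · rw [if_neg hnotlt, hD]
      · intro j hj hne
        have hj1 : j + 1 < m := by
          simp only [Finset.mem_range] at hj; omega
        rw [if_pos hj1, hB j hj1]
      · intro h; exact absurd (Finset.mem_range.mpr hlastlt) h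
    have hsum2 : ∑ j ∈ Finset.range m, ⌊α' j - α j⌋ = 0 := by
      apply Finset.sum_eq_zero
      intro j hj
      exact hA j (Finset.mem_range.mp hj)
    rw [hsum1, hsum2]; decide
end
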